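/- arXiv:1210.4542 — 2 statements merged into one kernel-verified Lean document; each statement's English description precedes it below -/
import Mathlib

section
/- Let V be a symmetric monoidal closed category and m : B₁ ⟶ B₂ a morphism of V. Then m is a strong monomorphism if and only if m is a monomorphism and every epimorphism e of V is V-orthogonal to m. -/
open CategoryTheory

/-- `e` is `V`-orthogonal to `m` when the internal-hom square of `(e, m)` is a
pullback in `V`. -/
def VOrthogonal {V : Type*} [Category V] [MonoidalCategory V] [SymmetricCategory V]
    [MonoidalClosed V] {A₁ A₂ B₁ B₂ : V} (e : A₁ ⟶ A₂) (m : B₁ ⟶ B₂) : Prop :=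
  IsPullback ((MonoidalClosed.pre e).app B₁) ((ihom A₂).map m)
    ((ihom A₁).map m) ((MonoidalClosed.pre e).app B₂)

open MonoidalCategory MonoidalClosed Limits

section Aux

variable {V : Type*} [Category V] [MonoidalCategory V] [SymmetricCategory V]
    [MonoidalClosed V]

lemma aux_uncurry_comp_pre {A₁ A₂ B X : V} (e : A₁ ⟶ A₂) (t : X ⟶ (ihom A₂).obj B) :
    uncurry (t ≫ (MonoidalClosed.pre e).app B) = (e ▷ X) ≫ uncurry t := by
  rw [uncurry_natural_left, MonoidalClosed.uncurry_pre, uncurry_eq, ← Category.assoc,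
    whisker_exchange, Category.assoc]

lemma aux_epi_whiskerRight {A₁ A₂ : V} (e : A₁ ⟶ A₂) [Epi e] (X : V) : Epi (e ▷ X) := by
  have h1 : Epi ((MonoidalCategory.tensorLeft X).map e) :=
    (Functor.preservesEpimorphisms_of_adjunction (ihom.adjunction X)).preserves e
  have h2 : Epi (X ◁ e) := h1
  have : e ▷ X = (β_ A₁ X).hom ≫ (X ◁ e) ≫ (β_ X A₂).hom := by
    rw [← BraidedCategory.braiding_naturality_left_assoc]
    simp
  rw [this]
  infer_instance

end Aux

/-- In a symmetric monoidal closed category, a morphism `m` is a strong monomorphism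
iff it is a monomorphism and every epimorphism is `V`-orthogonal to `m`. -/
theorem stmt_5 {V : Type*} [Category V] [MonoidalCategory V] [SymmetricCategory V]
    [MonoidalClosed V] {B₁ B₂ : V} (m : B₁ ⟶ B₂) :
    StrongMono m ↔
      (Mono m ∧ ∀ {A₁ A₂ : V} (e : A₁ ⟶ A₂), Epi e → VOrthogonal e m) := by
  constructor
  · intro hm
    refine ⟨hm.mono, fun {A₁ A₂} e he => ?_⟩
    have comm : (MonoidalClosed.pre e).app B₁ ≫ (ihom A₁).map m =
        (ihom A₂).map m ≫ (MonoidalClosed.pre e).app B₂ :=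
      ((MonoidalClosed.pre e).naturality m).symm
    refine IsPullback.of_isLimit (PullbackCone.IsLimit.mk comm ?_ ?_ ?_ ?_)
    · intro s
      -- uncurry the cone data
      have hsq : uncurry s.fst ≫ m = (e ▷ s.pt) ≫ uncurry s.snd := by
        rw [← uncurry_natural_right, s.condition, aux_uncurry_comp_pre]
      have : Epi (e ▷ s.pt) := aux_epi_whiskerRight e s.pt
      have sq : CommSq (uncurry s.fst) (e ▷ s.pt) m (uncurry s.snd) := ⟨hsq⟩
      have := hm.rlp (e ▷ s.pt)
      exact curry sq.lift
    · intro s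
      apply uncurry_injective
      set sq : CommSq (uncurry s.fst) (e ▷ s.pt) m (uncurry s.snd) :=
        ⟨by rw [← uncurry_natural_right, s.condition, aux_uncurry_comp_pre]⟩
      have : Epi (e ▷ s.pt) := aux_epi_whiskerRight e s.pt
      have := hm.rlp (e ▷ s.pt)
      rw [aux_uncurry_comp_pre, uncurry_curry]
      exact sq.fac_left
    · intro s
      apply uncurry_injective
      set sq : CommSq (uncurry s.fst) (e ▷ s.pt) m (uncurry s.snd) :=
        ⟨by rw [← uncurry_natural_right, s.condition, aux_uncurry_comp_pre]⟩
      have : Epi (e ▷ s.pt) := aux_epi_whiskerRight e s.pt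
      have := hm.rlp (e ▷ s.pt)
      rw [uncurry_natural_right, uncurry_curry]
      exact sq.fac_right
    · intro s l hl₁ hl₂
      set sq : CommSq (uncurry s.fst) (e ▷ s.pt) m (uncurry s.snd) :=
        ⟨by rw [← uncurry_natural_right, s.condition, aux_uncurry_comp_pre]⟩
      have : Epi (e ▷ s.pt) := aux_epi_whiskerRight e s.pt
      have := hm.rlp (e ▷ s.pt)
      apply uncurry_injective
      rw [uncurry_curry]
      have h1 : (e ▷ s.pt) ≫ uncurry l = uncurry s.fst := by
        rw [← aux_uncurry_comp_pre, hl₁]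
      rw [← cancel_epi (e ▷ s.pt), h1, sq.fac_left]
  · rintro ⟨hmono, horth⟩
    have : Mono m := hmono
    refine StrongMono.mk' fun A₁ A₂ e he u v sq => ?_
    have hpb := horth e he
    -- lift via the pullback, using X = 𝟙_ V
    have hw : curry ((ρ_ A₁).hom ≫ u) ≫ (ihom A₁).map m =
        curry ((ρ_ A₂).hom ≫ v) ≫ (MonoidalClosed.pre e).app B₂ := by
      apply uncurry_injective
      rw [uncurry_natural_right, uncurry_curry, aux_uncurry_comp_pre, uncurry_curry,
        Category.assoc, sq.w, ← MonoidalCategory.rightUnitor_naturality_assoc]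
    set l : 𝟙_ V ⟶ (ihom A₂).obj B₁ := hpb.lift _ _ hw
    have hl₁ : l ≫ (MonoidalClosed.pre e).app B₁ = curry ((ρ_ A₁).hom ≫ u) :=
      hpb.lift_fst _ _ hw
    have hl₂ : l ≫ (ihom A₂).map m = curry ((ρ_ A₂).hom ≫ v) := hpb.lift_snd _ _ hw
    refine ⟨⟨⟨(ρ_ A₂).inv ≫ uncurry l, ?_, ?_⟩⟩⟩
    · have := congrArg uncurry hl₁
      rw [aux_uncurry_comp_pre, uncurry_curry] at this
      have h2 : e ≫ (ρ_ A₂).inv ≫ uncurry l = (ρ_ A₁).inv ≫ (e ▷ 𝟙_ V) ≫ uncurry l := by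
        rw [← MonoidalCategory.rightUnitor_inv_naturality_assoc]
      rw [h2, this]
      simp
    · have := congrArg uncurry hl₂
      rw [uncurry_natural_right, uncurry_curry] at this
      rw [Category.assoc, this]
      simp
end

section
/- Let V be a monoidal category, C a category with an enriched ordinary category structure over V, and E, M classes of morphisms of C such that: (i) E and M are each closed under composition and contain all isomorphisms; (ii) every member of E is V-orthogonal to every member of M; (iii) every morphism of C factors as a member of E followed by a member of M. Then M is exactly the class of morphisms of C that are V-orthogonal on the right to every member of E, and E is exactly the class of morphisms of C that are V-orthogonal on the left to every member of M; that is, (E,M) is a V-factorization system on C. -/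
open CategoryTheory

/-- `e` is `V`-orthogonal to `m` when the eHom-square of `(e, m)` is a pullback in `V`. -/
def EHomOrthogonal (V : Type*) [Category V] [MonoidalCategory V]
    {C : Type*} [Category C] [EnrichedOrdinaryCategory V C]
    {A₁ A₂ B₁ B₂ : C} (e : A₁ ⟶ A₂) (m : B₁ ⟶ B₂) : Prop :=
  IsPullback (eHomWhiskerRight V e B₁) (eHomWhiskerLeft V A₂ m)
    (eHomWhiskerLeft V A₁ m) (eHomWhiskerRight V e B₂)

section Aux

open MonoidalCategory Category

variable (V : Type*) [Category V] [MonoidalCategory V]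
    {C : Type*} [Category C] [EnrichedOrdinaryCategory V C]

lemma eHomEquiv_comp_left' {X Y Z : C} (f : X ⟶ Y) (g : Y ⟶ Z) :
    eHomEquiv V (f ≫ g) = eHomEquiv V f ≫ eHomWhiskerLeft V X g := by
  dsimp [eHomWhiskerLeft]
  rw [eHomEquiv_comp, MonoidalCategory.tensorHom_def, unitors_inv_equal, assoc,
    ← rightUnitor_inv_naturality_assoc]

lemma eHomEquiv_comp_right' {X Y Z : C} (f : X ⟶ Y) (g : Y ⟶ Z) :
    eHomEquiv V (f ≫ g) = eHomEquiv V g ≫ eHomWhiskerRight V f Z := by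
  dsimp [eHomWhiskerRight]
  rw [eHomEquiv_comp, tensorHom_def', assoc, ← leftUnitor_inv_naturality_assoc]

/-- Enriched orthogonality gives unique diagonal fillers for commutative squares. -/
lemma EHomOrthogonal.existsUnique_lift {A₁ A₂ B₁ B₂ : C} {e : A₁ ⟶ A₂} {m : B₁ ⟶ B₂}
    (h : EHomOrthogonal V e m) (u : A₁ ⟶ B₁) (v : A₂ ⟶ B₂) (w : e ≫ v = u ≫ m) :
    ∃! d : A₂ ⟶ B₁, e ≫ d = u ∧ d ≫ m = v := by
  have hcomm : eHomEquiv V u ≫ eHomWhiskerLeft V A₁ m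
      = eHomEquiv V v ≫ eHomWhiskerRight V e B₂ := by
    rw [← eHomEquiv_comp_left', ← eHomEquiv_comp_right', ← w]
  refine ⟨(eHomEquiv V).symm (h.lift (eHomEquiv V u) (eHomEquiv V v) hcomm), ⟨?_, ?_⟩, ?_⟩
  · apply (eHomEquiv V).injective
    rw [eHomEquiv_comp_right', Equiv.apply_symm_apply, h.lift_fst]
  · apply (eHomEquiv V).injective
    rw [eHomEquiv_comp_left', Equiv.apply_symm_apply, h.lift_snd]
  · rintro d ⟨hd₁, hd₂⟩
    apply (eHomEquiv V).injective
    rw [Equiv.apply_symm_apply]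
    apply h.hom_ext
    · rw [h.lift_fst, ← eHomEquiv_comp_right', hd₁]
    · rw [h.lift_snd, ← eHomEquiv_comp_left', hd₂]

end Aux

/-- If `E` and `M` are closed under composition and contain all isomorphisms, every member
of `E` is `V`-orthogonal to every member of `M`, and `(E, M)`-factorizations exist, then
`(E, M)` is a `V`-factorization system: `M` consists exactly of the morphisms
`V`-orthogonal on the right to all of `E`, and `E` consists exactly of the morphisms
`V`-orthogonal on the left to all of `M`. -/
theorem stmt_8 (V : Type*) [Category V] [MonoidalCategory V]
    {C : Type*} [Category C] [EnrichedOrdinaryCategory V C]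
    (E M : MorphismProperty C)
    (hE_iso : ∀ {X Y : C} (f : X ⟶ Y), IsIso f → E f)
    (hE_comp : ∀ {X Y Z : C} (f : X ⟶ Y) (g : Y ⟶ Z), E f → E g → E (f ≫ g))
    (hM_iso : ∀ {X Y : C} (f : X ⟶ Y), IsIso f → M f)
    (hM_comp : ∀ {X Y Z : C} (f : X ⟶ Y) (g : Y ⟶ Z), M f → M g → M (f ≫ g))
    (horth : ∀ {A₁ A₂ B₁ B₂ : C} (e : A₁ ⟶ A₂) (m : B₁ ⟶ B₂),
      E e → M m → EHomOrthogonal V e m)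
    (hfact : ∀ {X Y : C} (f : X ⟶ Y),
      ∃ (Z : C) (e : X ⟶ Z) (m : Z ⟶ Y), E e ∧ M m ∧ e ≫ m = f) :
    (∀ {B₁ B₂ : C} (m : B₁ ⟶ B₂),
      M m ↔ ∀ {A₁ A₂ : C} (e : A₁ ⟶ A₂), E e → EHomOrthogonal V e m) ∧
    (∀ {A₁ A₂ : C} (e : A₁ ⟶ A₂),
      E e ↔ ∀ {B₁ B₂ : C} (m : B₁ ⟶ B₂), M m → EHomOrthogonal V e m) := by
  constructor
  · intro B₁ B₂ m
    constructor
    · intro hm A₁ A₂ e he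
      exact horth e m he hm
    · intro h
      obtain ⟨Z, e, m', he, hm', hfac⟩ := hfact m
      -- lift in the square (𝟙, m') for e ⊥ m
      obtain ⟨d, ⟨hd₁, hd₂⟩, -⟩ := (h e he).existsUnique_lift V (𝟙 B₁) m'
        (by simp [hfac])
      -- d ≫ e = 𝟙 by uniqueness of lifts for e ⊥ m'
      obtain ⟨d', -, hudq⟩ := (horth e m' he hm').existsUnique_lift V e m' rfl
      have h1 : d ≫ e = 𝟙 Z := by
        rw [hudq (d ≫ e) ⟨by rw [← Category.assoc, hd₁, Category.id_comp],
            by rw [Category.assoc, hfac, hd₂]⟩,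
          ← hudq (𝟙 Z) ⟨Category.comp_id e, Category.id_comp m'⟩]
      have : IsIso e := ⟨d, hd₁, h1⟩
      rw [← hfac]
      exact hM_comp e m' (hM_iso e this) hm'
  · intro A₁ A₂ e
    constructor
    · intro he B₁ B₂ m hm
      exact horth e m he hm
    · intro h
      obtain ⟨Z, e', m, he', hm, hfac⟩ := hfact e
      obtain ⟨d, ⟨hd₁, hd₂⟩, -⟩ := (h m hm).existsUnique_lift V e' (𝟙 A₂)
        (by simp [hfac])
      obtain ⟨d', -, hudq⟩ := (horth e' m he' hm).existsUnique_lift V e' m rfl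
      have h1 : m ≫ d = 𝟙 Z := by
        rw [hudq (m ≫ d) ⟨by rw [← Category.assoc, hfac, hd₁],
            by rw [Category.assoc, hd₂, Category.comp_id]⟩,
          ← hudq (𝟙 Z) ⟨Category.comp_id e', Category.id_comp m⟩]
      have : IsIso m := ⟨d, h1, hd₂⟩
      rw [← hfac]
      exact hE_comp e' m he' (hE_iso m this)
end
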